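/- Let m ≥ 2 and n ≥ 1 be integers and let T = 2^(n·m² + n·m + 1). Then ⌊n^(1/m)⌋ + 1 equals the cardinality of the set of tuples (a, b, c, d, e, f, g) ∈ {0, …, T−1}⁷ satisfying the five conditions a = (m+1)·g + 1, b = m·a, 2^b + c·g = c·2^a + d, d + e + g + 1 = 2^a, and d + f = n. -/

import Mathlib

set_option maxHeartbeats 1000000

lemma key1 (m g : ℕ) (hm : 1 ≤ m) : g ^ m + g < 2 ^ ((m + 1) * g + 1) := by
  have h1 : g ^ m ≤ 2 ^ (m * g) := by
    calc g ^ m ≤ (2 ^ g) ^ m := Nat.pow_le_pow_left (Nat.le_of_lt ((Nat.lt_two_pow_self (n := g)))) m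
    _ = 2 ^ (g * m) := by rw [← pow_mul]
    _ = 2 ^ (m * g) := by rw [mul_comm]
  have h2 : g < 2 ^ g := (Nat.lt_two_pow_self (n := g))
  have h3 : 2 ^ (m*g) ≤ 2 ^ ((m+1)*g) := Nat.pow_le_pow_right (by norm_num) (by nlinarith)
  have h4 : 2 ^ g ≤ 2 ^ ((m+1)*g) := Nat.pow_le_pow_right (by norm_num) (by nlinarith)
  calc g^m + g < 2^(m*g) + 2^g := by omega
  _ ≤ 2^((m+1)*g) + 2^((m+1)*g) := by omega
  _ = 2^((m+1)*g+1) := by ring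

theorem stmt_14 (m n r : ℕ) (hm : 2 ≤ m) (hn : 1 ≤ n)
    (hr1 : r ^ m ≤ n) (hr2 : n < (r + 1) ^ m)
    (T : ℕ) (hT : T = 2 ^ (n * m ^ 2 + n * m + 1)) :
    r + 1 =
      (Finset.filter
        (fun t : ℕ × ℕ × ℕ × ℕ × ℕ × ℕ × ℕ =>
          t.1 = (m + 1) * t.2.2.2.2.2.2 + 1 ∧
          t.2.1 = m * t.1 ∧
          2 ^ t.2.1 + t.2.2.1 * t.2.2.2.2.2.2 = t.2.2.1 * 2 ^ t.1 + t.2.2.2.1 ∧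
          t.2.2.2.1 + t.2.2.2.2.1 + t.2.2.2.2.2.2 + 1 = 2 ^ t.1 ∧
          t.2.2.2.1 + t.2.2.2.2.2.1 = n)
        (Finset.range T ×ˢ Finset.range T ×ˢ Finset.range T ×ˢ Finset.range T ×ˢ
          Finset.range T ×ˢ Finset.range T ×ˢ Finset.range T)).card := by
  classical
  have hm1 : 1 ≤ m := by omega
  set F : ℕ → ℕ × ℕ × ℕ × ℕ × ℕ × ℕ × ℕ := fun g =>
    ((m+1)*g+1, m*((m+1)*g+1),
      (2^(m*((m+1)*g+1)) - g^m)/(2^((m+1)*g+1) - g),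
      g^m, 2^((m+1)*g+1) - g - 1 - g^m, n - g^m, g) with hF
  have hrn : r ≤ n := le_trans (Nat.le_self_pow (by omega) r) hr1
  have hset : (Finset.filter
        (fun t : ℕ × ℕ × ℕ × ℕ × ℕ × ℕ × ℕ =>
          t.1 = (m + 1) * t.2.2.2.2.2.2 + 1 ∧
          t.2.1 = m * t.1 ∧
          2 ^ t.2.1 + t.2.2.1 * t.2.2.2.2.2.2 = t.2.2.1 * 2 ^ t.1 + t.2.2.2.1 ∧
          t.2.2.2.1 + t.2.2.2.2.1 + t.2.2.2.2.2.2 + 1 = 2 ^ t.1 ∧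
          t.2.2.2.1 + t.2.2.2.2.2.1 = n)
        (Finset.range T ×ˢ Finset.range T ×ˢ Finset.range T ×ˢ Finset.range T ×ˢ
          Finset.range T ×ˢ Finset.range T ×ˢ Finset.range T))
      = (Finset.range (r+1)).image F := by
    ext ⟨a, b, c, d, e, f, g⟩
    simp only [Finset.mem_filter, Finset.mem_image, Finset.mem_range, Finset.mem_product]
    constructor
    · rintro ⟨⟨ha, hb, hc, hd, he, hf, hg⟩, h1, h2, h3, h4, h5⟩
      subst h1 h2
      set a := (m+1)*g+1 with ha'
      have hkey : g^m + g < 2^a := key1 m g hm1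
      set X := 2^a with hX
      set Y := X - g with hY
      clear_value Y X a
      have hgX : g < X := by omega
      have hXY : X = Y + g := by omega
      have hYpos : 0 < Y := by omega
      have hdY : d < Y := by omega
      have h3' : 2^(m*a) = Y*c + d := by
        rw [hXY] at h3
        have hc1 : c*(Y+g) = c*Y + c*g := by ring
        rw [hc1] at h3
        have hc2 : c*Y = Y*c := by ring
        linarith only [h3, hc2]
      have hXm : 2^(m*a) = X^m := by rw [hX, ← pow_mul, mul_comm]
      have hgmX : g^m < Y := by omega
      have hgmXm : g^m ≤ X^m := Nat.pow_le_pow_left (by omega) m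
      obtain ⟨k, hk0⟩ := Nat.sub_dvd_pow_sub_pow X g m
      have hk : X^m - g^m = Y*k := by rw [hY]; exact hk0
      have hk' : X^m = Y*k + g^m := by omega
      have hmod1 : X^m % Y = d := by rw [← hXm, h3', Nat.mul_add_mod, Nat.mod_eq_of_lt hdY]
      have hmod2 : X^m % Y = g^m := by rw [hk', Nat.mul_add_mod, Nat.mod_eq_of_lt hgmX]
      have hgr : g ≤ r := by
        by_contra hcon
        have : (r+1)^m ≤ g^m := Nat.pow_le_pow_left (by omega) m
        omega
      obtain rfl : d = g^m := by omega
      have hcY : 2^(m*a) - g^m = Y * c := by omega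
      obtain rfl : c = (2^(m*a) - g^m)/Y := by
        rw [hcY, Nat.mul_div_cancel_left c hYpos]
      obtain rfl : e = X - g - 1 - g^m := by omega
      obtain rfl : f = n - g^m := by omega
      exact ⟨g, by omega, by simp [hF, hY, hX, ha']⟩
    · rintro ⟨w, hw, heq⟩
      simp only [hF, Prod.mk.injEq] at heq
      obtain ⟨q1, q2, q3, q4, q5, q6, q7⟩ := heq
      subst q1 q2 q3 q4 q5 q6 q7
      have hwr : w ≤ r := by omega
      have hwn : w ≤ n := by omega
      set a := (m+1)*w+1 with ha'
      have hkey : w^m + w < 2^a := key1 m w hm1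
      set X := 2^a with hX
      set Y := X - w with hY
      clear_value Y X a
      have hgX : w < X := by omega
      have hXY : X = Y + w := by omega
      have hYpos : 0 < Y := by omega
      have hXm : 2^(m*a) = X^m := by rw [hX, ← pow_mul, mul_comm]
      have hgmX : w^m < Y := by omega
      have hgmn : w^m ≤ n := le_trans (Nat.pow_le_pow_left hwr m) hr1
      obtain ⟨k, hk0⟩ := Nat.sub_dvd_pow_sub_pow X w m
      have hk : X^m - w^m = Y*k := by rw [hY]; exact hk0
      have hgmXm : w^m ≤ X^m := Nat.pow_le_pow_left (by omega) m
      have hk' : X^m = Y*k + w^m := by omega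
      have hcval : (2^(m*a) - w^m)/Y = k := by
        rw [hXm]
        have h : X^m - w^m = Y*k := by omega
        rw [h]
        exact Nat.mul_div_cancel_left k hYpos
      constructor
      · -- bounds
        have haE : a ≤ n*m^2 + n*m + 1 := by
          have h1 : (m+1)*w ≤ (m+1)*n := Nat.mul_le_mul_left _ hwn
          have h2 : (m+1)*n ≤ n*m^2+n*m := by
            have h2a := Nat.le_mul_of_pos_right n (show 0 < m^2 by positivity)
            have h2b : (m+1)*n = n*m + n := by ring
            linarith only [h2a, h2b]
          omega
        have hTE : n*m^2+n*m+1 < T := by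
          rw [hT]; exact Nat.lt_two_pow_self
        have hXT : X ≤ T := by
          rw [hX, hT]; exact Nat.pow_le_pow_right (by norm_num) haE
        have hnm' : n ≤ n*m := Nat.le_mul_of_pos_right n (by omega)
        have hnT : n < T := by omega
        have haT : a < T := by omega
        have hbT : m*a < T := by
          have h1 : n*m^2+n*m < 2^(n*m^2+n*m) := Nat.lt_two_pow_self
          have h2 : (2:ℕ)^(n*m^2+n*m) * 2 = 2^(n*m^2+n*m+1) := (pow_succ 2 (n*m^2+n*m)).symm
          have h3 : m*a ≤ 2*(n*m^2+n*m) := by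
            have h4 : m*a = m*(m+1)*w + m := by rw [ha']; ring
            have h5 : m*(m+1)*w ≤ m*(m+1)*n := Nat.mul_le_mul_left _ hwn
            have h6 : m*(m+1)*n = n*m^2+n*m := by ring
            have h7 : m ≤ n*m := Nat.le_mul_of_pos_left m hn
            have h8a : n*m ≤ n*m*m := Nat.le_mul_of_pos_right (n*m) (by omega)
            have h8 : n*m ≤ n*m^2 := by rw [pow_two, ← mul_assoc]; exact h8a
            linarith only [h4, h5, h6, h7, h8]
          rw [hT]; omega
        have hcT : (2^(m*a) - w^m)/Y < T := by
          rw [hcval]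
          have hdouble : (2:ℕ)^(a-1)*2 = 2^a := by
            rw [← pow_succ]; congr 1; omega
          have h2a1 : a ≤ 2^(a-1) := by
            have h0 := (Nat.lt_two_pow_self (n := a-1))
            omega
          have hgsmall : w ≤ 2^(a-1) := by
            have hww : w ≤ (m+1)*w := Nat.le_mul_of_pos_left w (by omega)
            omega
          have hYbig : 2^(a-1) ≤ Y := by omega
          have hkY : k * 2^(a-1) ≤ 2^(m*a) := by
            calc k * 2^(a-1) ≤ k * Y := Nat.mul_le_mul_left k hYbig
            _ = Y * k := by ring
            _ ≤ X^m := by omega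
            _ = 2^(m*a) := hXm.symm
          have hale : a ≤ m*a := Nat.le_mul_of_pos_left a (by omega)
          have hsplit : (2:ℕ)^(m*a) = 2^(m*a - (a-1)) * 2^(a-1) := by
            rw [← pow_add]
            congr 1
            omega
          have hk2 : k ≤ 2^(m*a - (a-1)) := by
            rw [hsplit] at hkY
            exact Nat.le_of_mul_le_mul_right hkY (pow_pos (by norm_num) _)
          have hexp : m*a - (a-1) < n*m^2 + n*m + 1 := by
            obtain ⟨j, hj⟩ : ∃ j, m = j + 1 := ⟨m-1, by omega⟩
            have h1 : m*a - (a-1) = j*a + 1 := by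
              subst hj
              have : (j+1)*a = j*a + a := by ring
              omega
            rw [h1]
            have h2 : j*a ≤ j*((m+1)*n+1) := by
              apply Nat.mul_le_mul_left
              have : (m+1)*w ≤ (m+1)*n := Nat.mul_le_mul_left _ hwn
              omega
            have h3 : j*((m+1)*n+1) < n*m^2+n*m := by
              subst hj
              have e1 : j*((j+1+1)*n+1) = n*(j*j+2*j) + j := by ring
              have e2 : n*(j+1)^2+n*(j+1) = n*(j*j+2*j) + n*(j+2) := by ring
              have e3 : j + 1 ≤ n*(j+2) := by
                have := Nat.le_mul_of_pos_left (j+2) hn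
                omega
              omega
            omega
          have h4 : (2:ℕ)^(m*a-(a-1)) < 2^(n*m^2+n*m+1) :=
            Nat.pow_lt_pow_right (by norm_num) hexp
          rw [hT]; omega
        have hdT : w^m < T := by omega
        have heT : Y - 1 - w^m < T := by omega
        have hfT : n - w^m < T := by omega
        have hgT : w < T := by omega
        exact ⟨haT, hbT, hcT, hdT, heT, hfT, hgT⟩
      · refine ⟨rfl, rfl, ?_, by omega, by omega⟩
        show 2^(m*a) + (2^(m*a) - w^m)/Y * w = (2^(m*a) - w^m)/Y * X + w^m
        rw [hcval]
        have h1 : k * X = k * Y + k * w := by rw [hXY]; ring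
        have h2 : k*Y = Y*k := by ring
        linarith only [hXm, hk', h1, h2]
  rw [hset, Finset.card_image_of_injective _ ?hinj, Finset.card_range]
  intro x y hxy
  have := congrArg (fun t : ℕ×ℕ×ℕ×ℕ×ℕ×ℕ×ℕ => t.2.2.2.2.2.2) hxy
  simpa [hF] using this
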